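/- There exist a constant c > 0 and a threshold n₀ such that for all n ≥ n₀, the number P_n of isomorphism classes of trapezoid graphs on n vertices satisfies log₂ P_n ≥ 3n·log₂ n − 4n·log₂ log₂ n − c·n. -/

import Mathlib

/-- The setoid on graphs on `Fin n` satisfying a property `P`, identifying isomorphic graphs. -/
def graphIsoSetoid (n : ℕ) (P : SimpleGraph (Fin n) → Prop) :
    Setoid {G : SimpleGraph (Fin n) // P G} where
  r G H := Nonempty (G.val ≃g H.val)
  iseqv := ⟨fun _ => ⟨SimpleGraph.Iso.refl⟩, fun ⟨e⟩ => ⟨e.symm⟩,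
    fun ⟨e⟩ ⟨f⟩ => ⟨e.trans f⟩⟩

/-- The number of isomorphism classes of graphs on `Fin n` satisfying `P`. -/
noncomputable def numIsoClasses (n : ℕ) (P : SimpleGraph (Fin n) → Prop) : ℕ :=
  Nat.card (Quotient (graphIsoSetoid n P))

/-- The trapezoid with corners `(a,1)`, `(b,1)` on the upper line and `(c,0)`, `(d,0)` on the
lower line. -/
def trapezoid (a b c d : ℝ) : Set (ℝ × ℝ) :=
  convexHull ℝ {((a, 1) : ℝ × ℝ), (b, 1), (c, 0), (d, 0)}

/-- `G` is a trapezoid graph: an intersection graph of trapezoids between two parallel lines. -/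
def IsTrapezoidGraph {n : ℕ} (G : SimpleGraph (Fin n)) : Prop :=
  ∃ a b c d : Fin n → ℝ, (∀ v, a v ≤ b v ∧ c v ≤ d v) ∧
    ∀ u v : Fin n, u ≠ v →
      (G.Adj u v ↔
        (trapezoid (a u) (b u) (c u) (d u) ∩ trapezoid (a v) (b v) (c v) (d v)).Nonempty)

lemma trap_comb {a b c d : ℝ} {P Q : ℝ × ℝ}
    (hP : P ∈ ({((a, 1) : ℝ × ℝ), (b, 1), (c, 0), (d, 0)} : Set (ℝ × ℝ)))
    (hQ : Q ∈ ({((a, 1) : ℝ × ℝ), (b, 1), (c, 0), (d, 0)} : Set (ℝ × ℝ)))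
    {t : ℝ} (h0 : 0 ≤ t) (h1 : t ≤ 1) :
    t • P + (1 - t) • Q ∈ trapezoid a b c d :=
  (convex_convexHull ℝ _) (subset_convexHull ℝ _ hP) (subset_convexHull ℝ _ hQ)
    h0 (by linarith) (by ring)

lemma trap_left_edge {a b c d : ℝ} {t : ℝ} (h0 : 0 ≤ t) (h1 : t ≤ 1) :
    ((t * a + (1 - t) * c, t) : ℝ × ℝ) ∈ trapezoid a b c d := by
  have := trap_comb (a := a) (b := b) (c := c) (d := d)
    (P := ((a, 1) : ℝ × ℝ)) (Q := ((c, 0) : ℝ × ℝ)) (by simp) (by simp) h0 h1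
  convert this using 2 <;> simp [Prod.smul_mk] <;> ring

lemma trap_right_edge {a b c d : ℝ} {t : ℝ} (h0 : 0 ≤ t) (h1 : t ≤ 1) :
    ((t * b + (1 - t) * d, t) : ℝ × ℝ) ∈ trapezoid a b c d := by
  have := trap_comb (a := a) (b := b) (c := c) (d := d)
    (P := ((b, 1) : ℝ × ℝ)) (Q := ((d, 0) : ℝ × ℝ)) (by simp) (by simp) h0 h1
  convert this using 2 <;> simp [Prod.smul_mk] <;> ring

lemma trap_top {a b c d : ℝ} {t : ℝ} (h0 : 0 ≤ t) (h1 : t ≤ 1) :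
    ((t * a + (1 - t) * b, 1) : ℝ × ℝ) ∈ trapezoid a b c d := by
  have := trap_comb (a := a) (b := b) (c := c) (d := d)
    (P := ((a, 1) : ℝ × ℝ)) (Q := ((b, 1) : ℝ × ℝ)) (by simp) (by simp) h0 h1
  convert this using 2 <;> simp [Prod.smul_mk] <;> ring

lemma trap_bot {a b c d : ℝ} {t : ℝ} (h0 : 0 ≤ t) (h1 : t ≤ 1) :
    ((t * c + (1 - t) * d, 0) : ℝ × ℝ) ∈ trapezoid a b c d := by
  have := trap_comb (a := a) (b := b) (c := c) (d := d)
    (P := ((c, 0) : ℝ × ℝ)) (Q := ((d, 0) : ℝ × ℝ)) (by simp) (by simp) h0 h1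
  convert this using 2 <;> simp [Prod.smul_mk] <;> ring

lemma trap_subset_halfspace {e f r : ℝ} {a b c d : ℝ}
    (h1 : a * e + 1 * f ≤ r) (h2 : b * e + 1 * f ≤ r) (h3 : c * e ≤ r) (h4 : d * e ≤ r) :
    trapezoid a b c d ⊆ {q : ℝ × ℝ | q.1 * e + q.2 * f ≤ r} := by
  apply convexHull_min
  · rintro p hp
    simp only [Set.mem_insert_iff, Set.mem_singleton_iff] at hp
    rcases hp with rfl | rfl | rfl | rfl <;> simpa using (by linarith : _)
  · have : IsLinearMap ℝ (fun q : ℝ × ℝ => q.1 * e + q.2 * f) := by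
      constructor <;> intros <;> simp [Prod.fst_add, Prod.snd_add, smul_eq_mul] <;> ring
    exact convex_halfSpace_le this r

lemma trap_y_le {a b c d : ℝ} {p : ℝ × ℝ} (hp : p ∈ trapezoid a b c d) : p.2 ≤ 1 := by
  have := trap_subset_halfspace (a := a) (b := b) (c := c) (d := d)
    (e := 0) (f := 1) (r := 1) (by norm_num) (by norm_num) (by norm_num) (by norm_num) hp
  simpa using this

lemma trap_y_ge {a b c d : ℝ} {p : ℝ × ℝ} (hp : p ∈ trapezoid a b c d) : 0 ≤ p.2 := by
  have := trap_subset_halfspace (a := a) (b := b) (c := c) (d := d)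
    (e := 0) (f := -1) (r := 0) (by norm_num) (by norm_num) (by norm_num) (by norm_num) hp
  simp at this; linarith

lemma trap_le_right {a b c d : ℝ} (hab : a ≤ b) (hcd : c ≤ d) {p : ℝ × ℝ}
    (hp : p ∈ trapezoid a b c d) : p.1 ≤ p.2 * b + (1 - p.2) * d := by
  have := trap_subset_halfspace (a := a) (b := b) (c := c) (d := d)
    (e := 1) (f := d - b) (r := d) (by linarith) (by linarith) (by linarith) (by linarith) hp
  simp only [Set.mem_setOf_eq] at this; nlinarith [this]

lemma trap_ge_left {a b c d : ℝ} (hab : a ≤ b) (hcd : c ≤ d) {p : ℝ × ℝ}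
    (hp : p ∈ trapezoid a b c d) : p.2 * a + (1 - p.2) * c ≤ p.1 := by
  have := trap_subset_halfspace (a := a) (b := b) (c := c) (d := d)
    (e := -1) (f := a - c) (r := -c) (by linarith) (by linarith) (by linarith) (by linarith) hp
  simp only [Set.mem_setOf_eq] at this; nlinarith [this]


lemma trap_top_mem {a b c d x : ℝ} (h1 : a ≤ x) (h2 : x ≤ b) :
    ((x, 1) : ℝ × ℝ) ∈ trapezoid a b c d := by
  have hx : x ∈ segment ℝ a b := by
    rw [segment_eq_Icc (h1.trans h2)]; exact ⟨h1, h2⟩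
  obtain ⟨s, t, hs, ht, hst, hx⟩ := hx
  have h := trap_comb (a := a) (b := b) (c := c) (d := d)
    (P := ((a, 1) : ℝ × ℝ)) (Q := ((b, 1) : ℝ × ℝ)) (by simp) (by simp) hs (by linarith)
  have hpt : s • ((a, 1) : ℝ × ℝ) + (1 - s) • ((b, 1) : ℝ × ℝ) = (x, 1) := by
    rw [show (1 : ℝ) - s = t by linarith]
    simp only [Prod.smul_mk, Prod.mk_add_mk, smul_eq_mul] at hx ⊢
    rw [hx]; norm_num; linarith
  rwa [hpt] at h

lemma trap_cross {a b c d a' b' c' d' : ℝ} (h1 : c' ≤ d) (h2 : b ≤ a') :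
    (trapezoid a b c d ∩ trapezoid a' b' c' d').Nonempty := by
  set f : ℝ → ℝ := fun y => (y * a' + (1 - y) * c') - (y * b + (1 - y) * d) with hf
  have hcont : ContinuousOn f (Set.Icc 0 1) := by fun_prop
  have hmem : (0 : ℝ) ∈ Set.Icc (f 0) (f 1) := by
    constructor <;> simp [hf] <;> linarith
  obtain ⟨y, hy, hfy⟩ := intermediate_value_Icc (by norm_num : (0:ℝ) ≤ 1) hcont hmem
  refine ⟨(y * b + (1 - y) * d, y), trap_right_edge hy.1 hy.2, ?_⟩
  have : y * b + (1 - y) * d = y * a' + (1 - y) * c' := by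
    simp [hf] at hfy; linarith
  rw [this]
  exact trap_left_edge hy.1 hy.2

theorem trap_inter_iff {a b c d a' b' c' d' : ℝ} (hab : a ≤ b) (hcd : c ≤ d)
    (hab' : a' ≤ b') (hcd' : c' ≤ d') :
    (trapezoid a b c d ∩ trapezoid a' b' c' d').Nonempty ↔
      ¬(b < a' ∧ d < c') ∧ ¬(b' < a ∧ d' < c) := by
  constructor
  · rintro ⟨p, hp1, hp2⟩
    have h0 := trap_y_ge hp1
    have h1 := trap_y_le hp1
    constructor
    · rintro ⟨h2, h3⟩
      have A := trap_le_right hab hcd hp1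
      have B := trap_ge_left hab' hcd' hp2
      rcases eq_or_lt_of_le h0 with ht | ht
      · rw [← ht] at A B; simp at A B; linarith
      · nlinarith [mul_pos ht (sub_pos.2 h2),
          mul_nonneg (by linarith : (0:ℝ) ≤ 1 - p.2) (sub_pos.2 h3).le]
    · rintro ⟨h2, h3⟩
      have A := trap_le_right hab' hcd' hp2
      have B := trap_ge_left hab hcd hp1
      rcases eq_or_lt_of_le h0 with ht | ht
      · rw [← ht] at A B; simp at A B; linarith
      · nlinarith [mul_pos ht (sub_pos.2 h2),
          mul_nonneg (by linarith : (0:ℝ) ≤ 1 - p.2) (sub_pos.2 h3).le]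
  · rintro ⟨h1, h2⟩
    push_neg at h1 h2
    by_cases hA : a' ≤ b
    · by_cases hB : a ≤ b'
      · refine ⟨(max a a', 1), trap_top_mem (le_max_left _ _) (max_le hab hA), ?_⟩
        exact trap_top_mem (le_max_right _ _) (max_le hB hab')
      · push_neg at hB
        have := trap_cross (a := a') (b := b') (c := c') (d := d')
          (a' := a) (b' := b) (c' := c) (d' := d) (h2 hB) hB.le
        rwa [Set.inter_comm] at this
    · push_neg at hA
      exact trap_cross (h1 hA) hA.le

-- quadruple (a, b, c, d)
abbrev Quad (k : ℕ) := Fin k × Fin k × Fin k × Fin k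

/-- parameters of the trapezoid of vertex `v` -/
def tparams (n k : ℕ) (w : Fin (n - 6*k) → Quad k) (v : Fin n) : ℝ × ℝ × ℝ × ℝ :=
  if v.val < k then ((v.val : ℝ), (v.val : ℝ), -(10*k), -(10*k))
  else if v.val < 3*k then ((v.val : ℝ) - k, (v.val : ℝ) - k, 10*k, 10*k)
  else if v.val < 4*k then (-(10*k), -(10*k), (v.val : ℝ) - 3*k, (v.val : ℝ) - 3*k)
  else if h : v.val < 6*k then ((10*k : ℝ), 10*k, (v.val : ℝ) - 4*k, (v.val : ℝ) - 4*k)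
  else
    let q := w ⟨v.val - 6*k, by omega⟩
    ((q.1 : ℝ), (q.1 : ℝ) + q.2.1, (q.2.2.1 : ℝ), (q.2.2.1 : ℝ) + q.2.2.2)

/-- `p` strictly to the left of `q` -/
def sepLt (p q : ℝ × ℝ × ℝ × ℝ) : Prop := p.2.1 < q.1 ∧ p.2.2.2 < q.2.2.1



def tgraph (n k : ℕ) (w : Fin (n - 6*k) → Quad k) : SimpleGraph (Fin n) where
  Adj u v := u ≠ v ∧ ¬ sepLt (tparams n k w u) (tparams n k w v) ∧
    ¬ sepLt (tparams n k w v) (tparams n k w u)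
  symm := by constructor; intro u v ⟨h1, h2, h3⟩; exact ⟨h1.symm, h3, h2⟩
  loopless := ⟨fun v h => h.1 rfl⟩

lemma tparams_le (n k : ℕ) (w : Fin (n - 6*k) → Quad k) (v : Fin n) :
    (tparams n k w v).1 ≤ (tparams n k w v).2.1 ∧
    (tparams n k w v).2.2.1 ≤ (tparams n k w v).2.2.2 := by
  unfold tparams
  split_ifs <;> simp <;> positivity

lemma tgraph_isTrapezoid (n k : ℕ) (w : Fin (n - 6*k) → Quad k) :
    IsTrapezoidGraph (tgraph n k w) := by
  refine ⟨fun v => (tparams n k w v).1, fun v => (tparams n k w v).2.1,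
    fun v => (tparams n k w v).2.2.1, fun v => (tparams n k w v).2.2.2,
    fun v => tparams_le n k w v, fun u v huv => ?_⟩
  rw [trap_inter_iff (tparams_le n k w u).1 (tparams_le n k w u).2
    (tparams_le n k w v).1 (tparams_le n k w v).2]
  unfold tgraph sepLt
  show (u ≠ v ∧ _ ∧ _) ↔ _
  constructor
  · rintro ⟨-, h2, h3⟩
    exact ⟨fun h => h2 h, fun h => h3 h⟩
  · rintro ⟨h2, h3⟩
    exact ⟨huv, h2, h3⟩

section claims
variable (n k : ℕ) (w : Fin (n - 6*k) → Quad k)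

lemma tparams_code (j : Fin (n - 6*k)) (h : 6*k + j.val < n) :
    tparams n k w ⟨6*k + j.val, h⟩ =
      (((w j).1 : ℝ), ((w j).1 : ℝ) + (w j).2.1, ((w j).2.2.1 : ℝ),
        ((w j).2.2.1 : ℝ) + (w j).2.2.2) := by
  have hj := j.isLt
  unfold tparams
  simp only [Fin.val_mk]
  rw [if_neg (by omega), if_neg (by omega), if_neg (by omega), dif_neg (by omega)]
  simp only [Nat.add_sub_cancel_left, Fin.eta]

lemma tparams_A (p : ℕ) (hp : p < k) (h : p < n) :
    tparams n k w ⟨p, h⟩ = ((p : ℝ), (p : ℝ), -(10*(k:ℝ)), -(10*(k:ℝ))) := by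
  unfold tparams; simp only [Fin.val_mk]; rw [if_pos hp]

lemma tparams_B (p : ℕ) (hp : p < 2*k) (h : k + p < n) :
    tparams n k w ⟨k + p, h⟩ = ((p : ℝ), (p : ℝ), (10*k : ℝ), (10*k : ℝ)) := by
  unfold tparams; simp only [Fin.val_mk]; rw [if_neg (by omega), if_pos (by omega)]
  push_cast
  simp only [Prod.mk.injEq]
  and_intros <;> simp

lemma tparams_C (p : ℕ) (hp : p < k) (h : 3*k + p < n) :
    tparams n k w ⟨3*k + p, h⟩ = (-(10*(k:ℝ)), -(10*(k:ℝ)), (p : ℝ), (p : ℝ)) := by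
  unfold tparams; simp only [Fin.val_mk]
  rw [if_neg (by omega), if_neg (by omega), if_pos (by omega)]
  push_cast
  simp only [Prod.mk.injEq]
  and_intros <;> simp

lemma tparams_D (p : ℕ) (hp : p < 2*k) (h : 4*k + p < n) :
    tparams n k w ⟨4*k + p, h⟩ = ((10*k : ℝ), (10*k : ℝ), (p : ℝ), (p : ℝ)) := by
  unfold tparams
  simp only [Fin.val_mk]
  rw [if_neg (by omega), if_neg (by omega), if_neg (by omega), dif_pos (by omega)]
  push_cast
  simp only [Prod.mk.injEq]
  and_intros <;> simp

variable (hk : 1 ≤ k)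
include hk

lemma adjA (j : Fin (n - 6*k)) (hv : 6*k + j.val < n) (p : ℕ) (hp : p < k)
    (hu : p < n) :
    ((tgraph n k w).Adj ⟨p, hu⟩ ⟨6*k + j.val, hv⟩ ↔ ((w j).1 : ℕ) ≤ p) := by
  have hk' : (1:ℝ) ≤ k := by exact_mod_cast hk
  have m1 : (0:ℝ) ≤ ((w j).1 : ℝ) := by positivity
  have m2 : (0:ℝ) ≤ ((w j).2.1 : ℝ) := by positivity
  have m3 : (0:ℝ) ≤ ((w j).2.2.1 : ℝ) := by positivity
  have m4 : (0:ℝ) ≤ ((w j).2.2.2 : ℝ) := by positivity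
  have l1 : ((w j).1 : ℝ) < k := by exact_mod_cast (w j).1.isLt
  have l2 : ((w j).2.1 : ℝ) < k := by exact_mod_cast (w j).2.1.isLt
  have l3 : ((w j).2.2.1 : ℝ) < k := by exact_mod_cast (w j).2.2.1.isLt
  have l4 : ((w j).2.2.2 : ℝ) < k := by exact_mod_cast (w j).2.2.2.isLt
  show (_ ≠ _ ∧ _ ∧ _) ↔ _
  rw [tparams_A n k w p hp hu, tparams_code n k w j hv]
  unfold sepLt
  dsimp only
  push_cast
  have hne : (⟨p, hu⟩ : Fin n) ≠ ⟨6*k + j.val, hv⟩ := by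
    simp only [ne_eq, Fin.mk.injEq]; omega
  constructor
  · rintro ⟨-, h2, h3⟩
    by_contra hle
    push_neg at hle
    have hle' : (p:ℝ) < ((w j).1 : ℝ) := by exact_mod_cast hle
    exact h2 ⟨hle', by linarith⟩
  · intro hle
    have hle' : ((w j).1 : ℝ) ≤ (p:ℝ) := by exact_mod_cast hle
    refine ⟨hne, ?_, ?_⟩
    · rintro ⟨ha, hb⟩
      linarith
    · rintro ⟨ha, hb⟩
      linarith

lemma adjB (j : Fin (n - 6*k)) (hv : 6*k + j.val < n) (p : ℕ) (hp : p < 2*k)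
    (hu : k + p < n) :
    ((tgraph n k w).Adj ⟨k + p, hu⟩ ⟨6*k + j.val, hv⟩ ↔ p ≤ ((w j).1 : ℕ) + ((w j).2.1 : ℕ)) := by
  have hk' : (1:ℝ) ≤ k := by exact_mod_cast hk
  have m1 : (0:ℝ) ≤ ((w j).1 : ℝ) := by positivity
  have m2 : (0:ℝ) ≤ ((w j).2.1 : ℝ) := by positivity
  have m3 : (0:ℝ) ≤ ((w j).2.2.1 : ℝ) := by positivity
  have m4 : (0:ℝ) ≤ ((w j).2.2.2 : ℝ) := by positivity
  have l1 : ((w j).1 : ℝ) < k := by exact_mod_cast (w j).1.isLt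
  have l2 : ((w j).2.1 : ℝ) < k := by exact_mod_cast (w j).2.1.isLt
  have l3 : ((w j).2.2.1 : ℝ) < k := by exact_mod_cast (w j).2.2.1.isLt
  have l4 : ((w j).2.2.2 : ℝ) < k := by exact_mod_cast (w j).2.2.2.isLt
  show (_ ≠ _ ∧ _ ∧ _) ↔ _
  rw [tparams_B n k w p hp hu, tparams_code n k w j hv]
  unfold sepLt
  dsimp only
  push_cast
  have hne : (⟨k + p, hu⟩ : Fin n) ≠ ⟨6*k + j.val, hv⟩ := by
    simp only [ne_eq, Fin.mk.injEq]; omega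
  constructor
  · rintro ⟨-, h2, h3⟩
    by_contra hle
    push_neg at hle
    have hle' : ((w j).1 : ℝ) + ((w j).2.1 : ℝ) < (p:ℝ) := by exact_mod_cast hle
    exact h3 ⟨hle', by linarith⟩
  · intro hle
    have hle' : (p:ℝ) ≤ ((w j).1 : ℝ) + ((w j).2.1 : ℝ) := by exact_mod_cast hle
    refine ⟨hne, ?_, ?_⟩
    · rintro ⟨ha, hb⟩
      linarith
    · rintro ⟨ha, hb⟩
      linarith

lemma adjC (j : Fin (n - 6*k)) (hv : 6*k + j.val < n) (p : ℕ) (hp : p < k)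
    (hu : 3*k + p < n) :
    ((tgraph n k w).Adj ⟨3*k + p, hu⟩ ⟨6*k + j.val, hv⟩ ↔ ((w j).2.2.1 : ℕ) ≤ p) := by
  have hk' : (1:ℝ) ≤ k := by exact_mod_cast hk
  have m1 : (0:ℝ) ≤ ((w j).1 : ℝ) := by positivity
  have m2 : (0:ℝ) ≤ ((w j).2.1 : ℝ) := by positivity
  have m3 : (0:ℝ) ≤ ((w j).2.2.1 : ℝ) := by positivity
  have m4 : (0:ℝ) ≤ ((w j).2.2.2 : ℝ) := by positivity
  have l1 : ((w j).1 : ℝ) < k := by exact_mod_cast (w j).1.isLt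
  have l2 : ((w j).2.1 : ℝ) < k := by exact_mod_cast (w j).2.1.isLt
  have l3 : ((w j).2.2.1 : ℝ) < k := by exact_mod_cast (w j).2.2.1.isLt
  have l4 : ((w j).2.2.2 : ℝ) < k := by exact_mod_cast (w j).2.2.2.isLt
  show (_ ≠ _ ∧ _ ∧ _) ↔ _
  rw [tparams_C n k w p hp hu, tparams_code n k w j hv]
  unfold sepLt
  dsimp only
  push_cast
  have hne : (⟨3*k + p, hu⟩ : Fin n) ≠ ⟨6*k + j.val, hv⟩ := by
    simp only [ne_eq, Fin.mk.injEq]; omega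
  constructor
  · rintro ⟨-, h2, h3⟩
    by_contra hle
    push_neg at hle
    have hle' : (p:ℝ) < ((w j).2.2.1 : ℝ) := by exact_mod_cast hle
    exact h2 ⟨by linarith, hle'⟩
  · intro hle
    have hle' : ((w j).2.2.1 : ℝ) ≤ (p:ℝ) := by exact_mod_cast hle
    refine ⟨hne, ?_, ?_⟩
    · rintro ⟨ha, hb⟩
      linarith
    · rintro ⟨ha, hb⟩
      linarith

lemma adjD (j : Fin (n - 6*k)) (hv : 6*k + j.val < n) (p : ℕ) (hp : p < 2*k)
    (hu : 4*k + p < n) :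
    ((tgraph n k w).Adj ⟨4*k + p, hu⟩ ⟨6*k + j.val, hv⟩ ↔ p ≤ ((w j).2.2.1 : ℕ) + ((w j).2.2.2 : ℕ)) := by
  have hk' : (1:ℝ) ≤ k := by exact_mod_cast hk
  have m1 : (0:ℝ) ≤ ((w j).1 : ℝ) := by positivity
  have m2 : (0:ℝ) ≤ ((w j).2.1 : ℝ) := by positivity
  have m3 : (0:ℝ) ≤ ((w j).2.2.1 : ℝ) := by positivity
  have m4 : (0:ℝ) ≤ ((w j).2.2.2 : ℝ) := by positivity
  have l1 : ((w j).1 : ℝ) < k := by exact_mod_cast (w j).1.isLt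
  have l2 : ((w j).2.1 : ℝ) < k := by exact_mod_cast (w j).2.1.isLt
  have l3 : ((w j).2.2.1 : ℝ) < k := by exact_mod_cast (w j).2.2.1.isLt
  have l4 : ((w j).2.2.2 : ℝ) < k := by exact_mod_cast (w j).2.2.2.isLt
  show (_ ≠ _ ∧ _ ∧ _) ↔ _
  rw [tparams_D n k w p hp hu, tparams_code n k w j hv]
  unfold sepLt
  dsimp only
  push_cast
  have hne : (⟨4*k + p, hu⟩ : Fin n) ≠ ⟨6*k + j.val, hv⟩ := by
    simp only [ne_eq, Fin.mk.injEq]; omega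
  constructor
  · rintro ⟨-, h2, h3⟩
    by_contra hle
    push_neg at hle
    have hle' : ((w j).2.2.1 : ℝ) + ((w j).2.2.2 : ℝ) < (p:ℝ) := by exact_mod_cast hle
    exact h3 ⟨by linarith, hle'⟩
  · intro hle
    have hle' : (p:ℝ) ≤ ((w j).2.2.1 : ℝ) + ((w j).2.2.2 : ℝ) := by exact_mod_cast hle
    refine ⟨hne, ?_, ?_⟩
    · rintro ⟨ha, hb⟩
      linarith
    · rintro ⟨ha, hb⟩
      linarith

end claims

lemma tgraph_inj (n k : ℕ) (hk : 1 ≤ k) (hkn : 6*k ≤ n) :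
    Function.Injective (tgraph n k) := by
  intro w w' hG
  funext j
  have hj := j.isLt
  have hv : 6*k + j.val < n := by omega
  have key1 : ∀ p : ℕ, ∀ hp : p < k, ∀ hu : p < n,
      (((w j).1 : ℕ) ≤ p ↔ ((w' j).1 : ℕ) ≤ p) := fun p hp hu => by
    rw [← adjA n k w hk j hv p hp hu, hG, adjA n k w' hk j hv p hp hu]
  have key2 : ∀ p : ℕ, ∀ hp : p < 2*k, ∀ hu : k + p < n,
      (p ≤ ((w j).1 : ℕ) + ((w j).2.1 : ℕ) ↔ p ≤ ((w' j).1 : ℕ) + ((w' j).2.1 : ℕ)) :=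
    fun p hp hu => by
    rw [← adjB n k w hk j hv p hp hu, hG, adjB n k w' hk j hv p hp hu]
  have key3 : ∀ p : ℕ, ∀ hp : p < k, ∀ hu : 3*k + p < n,
      (((w j).2.2.1 : ℕ) ≤ p ↔ ((w' j).2.2.1 : ℕ) ≤ p) := fun p hp hu => by
    rw [← adjC n k w hk j hv p hp hu, hG, adjC n k w' hk j hv p hp hu]
  have key4 : ∀ p : ℕ, ∀ hp : p < 2*k, ∀ hu : 4*k + p < n,
      (p ≤ ((w j).2.2.1 : ℕ) + ((w j).2.2.2 : ℕ) ↔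
        p ≤ ((w' j).2.2.1 : ℕ) + ((w' j).2.2.2 : ℕ)) := fun p hp hu => by
    rw [← adjD n k w hk j hv p hp hu, hG, adjD n k w' hk j hv p hp hu]
  have i1 := (w j).1.isLt; have i1' := (w' j).1.isLt
  have i2 := (w j).2.1.isLt; have i2' := (w' j).2.1.isLt
  have i3 := (w j).2.2.1.isLt; have i3' := (w' j).2.2.1.isLt
  have i4 := (w j).2.2.2.isLt; have i4' := (w' j).2.2.2.isLt
  have e1a := (key1 ((w j).1 : ℕ) i1 (by omega)).mp le_rfl
  have e1b := (key1 ((w' j).1 : ℕ) i1' (by omega)).mpr le_rfl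
  have e2a := (key2 (((w j).1 : ℕ) + ((w j).2.1 : ℕ)) (by omega) (by omega)).mp le_rfl
  have e2b := (key2 (((w' j).1 : ℕ) + ((w' j).2.1 : ℕ)) (by omega) (by omega)).mpr le_rfl
  have e3a := (key3 ((w j).2.2.1 : ℕ) i3 (by omega)).mp le_rfl
  have e3b := (key3 ((w' j).2.2.1 : ℕ) i3' (by omega)).mpr le_rfl
  have e4a := (key4 (((w j).2.2.1 : ℕ) + ((w j).2.2.2 : ℕ)) (by omega) (by omega)).mp le_rfl
  have e4b := (key4 (((w' j).2.2.1 : ℕ) + ((w' j).2.2.2 : ℕ)) (by omega) (by omega)).mpr le_rfl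
  simp only [Prod.ext_iff, Fin.ext_iff]
  omega

lemma card_subtype_le (n : ℕ) (P : SimpleGraph (Fin n) → Prop) :
    Nat.card {G : SimpleGraph (Fin n) // P G} ≤ numIsoClasses n P * n.factorial := by
  classical
  set s := graphIsoSetoid n P with hs
  have hrep : ∀ G : {G : SimpleGraph (Fin n) // P G},
      Nonempty (((Quotient.mk s G).out).val ≃g G.val) := fun G =>
    Quotient.exact (Quotient.out_eq (Quotient.mk s G))
  have hinj : Function.Injective (fun G : {G : SimpleGraph (Fin n) // P G} =>
      ((Quotient.mk s G), ((hrep G).some.toEquiv : Equiv.Perm (Fin n)))) := by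
    intro G H h
    rw [Prod.ext_iff] at h
    obtain ⟨h1, h2⟩ := h
    simp only at h1 h2
    set e := (hrep G).some with he
    set f := (hrep H).some with hf
    have houts : (Quotient.mk s G).out = (Quotient.mk s H).out := by rw [h1]
    have huv : ∀ x, e.symm x = f.symm x := fun x => by
      show e.toEquiv.symm x = f.toEquiv.symm x
      rw [h2]
    have hGH : ∀ u v, G.val.Adj u v ↔ H.val.Adj u v := by
      intro u v
      rw [← e.symm.map_adj_iff, ← f.symm.map_adj_iff, huv u, huv v, houts]
    apply Subtype.ext
    ext u v
    exact hGH u v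
  calc Nat.card {G : SimpleGraph (Fin n) // P G}
      ≤ Nat.card (Quotient s × Equiv.Perm (Fin n)) :=
        Nat.card_le_card_of_injective _ hinj
    _ = numIsoClasses n P * n.factorial := by
        rw [Nat.card_prod, numIsoClasses]
        congr 1
        rw [Nat.card_eq_fintype_card, Fintype.card_perm, Fintype.card_fin]

lemma count_lower (n k : ℕ) (hk : 1 ≤ k) (hkn : 6*k ≤ n) :
    (k^4)^(n - 6*k) ≤ numIsoClasses n IsTrapezoidGraph * n.factorial := by
  classical
  have h1 : (k^4)^(n - 6*k) = Nat.card (Fin (n - 6*k) → Quad k) := by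
    rw [Nat.card_fun]
    simp [Nat.card_eq_fintype_card]
    ring
  have hΦ : Function.Injective (fun w : Fin (n - 6*k) → Quad k =>
      (⟨tgraph n k w, tgraph_isTrapezoid n k w⟩ :
        {G : SimpleGraph (Fin n) // IsTrapezoidGraph G})) := by
    intro w w' h
    exact tgraph_inj n k hk hkn (congrArg Subtype.val h)
  calc (k^4)^(n - 6*k) = Nat.card (Fin (n - 6*k) → Quad k) := h1
    _ ≤ Nat.card {G : SimpleGraph (Fin n) // IsTrapezoidGraph G} :=
        Nat.card_le_card_of_injective _ hΦ
    _ ≤ numIsoClasses n IsTrapezoidGraph * n.factorial := card_subtype_le n _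

set_option maxHeartbeats 2000000 in
/-- There is a constant `c > 0` such that for all sufficiently large `n`, the number `P_n` of
isomorphism classes of trapezoid graphs on `n` vertices satisfies
`log₂ P_n ≥ 3 n log₂ n − 4 n log₂ log₂ n − c n`. -/
theorem stmt4 :
    ∃ c : ℝ, 0 < c ∧ ∃ n₀ : ℕ, ∀ n : ℕ, n₀ ≤ n →
      Real.logb 2 (numIsoClasses n IsTrapezoidGraph) ≥
        3 * (n : ℝ) * Real.logb 2 n - 4 * n * Real.logb 2 (Real.logb 2 n) - c * n := by
  refine ⟨100, by norm_num, 2^64, fun n hn => ?_⟩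
  have hn0 : 0 < n := lt_of_lt_of_le (by positivity) hn
  set L := Nat.log 2 n with hLdef
  have hL64 : 64 ≤ L := by
    have h := Nat.log_mono_right (b := 2) hn
    rwa [Nat.log_pow (by norm_num)] at h
  have hpowL : 2^L ≤ n := Nat.pow_log_le_self 2 hn0.ne'
  have hpowL' : n < 2^(L+1) := Nat.lt_pow_succ_log_self (by norm_num) n
  have h2L : 2*L ≤ 2^L := by
    have hp : L - 1 < 2^(L-1) := Nat.lt_two_pow_self
    have e : 2^L = 2*2^(L-1) := by
      calc 2^L = 2^((L-1)+1) := by congr 1; omega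
        _ = 2^(L-1) * 2 := pow_succ 2 (L-1)
        _ = 2*2^(L-1) := by ring
    omega
  have hLn : 2*L ≤ n := le_trans h2L hpowL
  set k := n / L with hkdef
  have hLpos : 0 < L := by omega
  have hk1 : 1 ≤ k := (Nat.one_le_div_iff hLpos).2 (by omega)
  have hkn : 6*k ≤ n := by
    have h1 : k ≤ n / 6 := Nat.div_le_div_left (by omega) (by omega)
    have h2 : n / 6 * 6 ≤ n := Nat.div_mul_le_self n 6
    omega
  have hkL : k * L ≤ n := Nat.div_mul_le_self n L
  have hcount := count_lower n k hk1 hkn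
  set m := n - 6*k with hmdef
  set P := numIsoClasses n IsTrapezoidGraph with hPdef
  have hP1 : 1 ≤ P := by
    rcases Nat.eq_zero_or_pos P with h0 | h0
    · rw [h0, zero_mul] at hcount
      have : 0 < (k^4)^m := pow_pos (pow_pos hk1 4) m
      omega
    · exact h0
  -- real versions
  have hNpos : (0:ℝ) < n := by exact_mod_cast hn0
  have hkr1 : (1:ℝ) ≤ (k:ℝ) := by exact_mod_cast hk1
  have hkr0 : (0:ℝ) ≤ (k:ℝ) := by linarith
  have hLr0 : (0:ℝ) < (L:ℝ) := by exact_mod_cast hLpos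
  set x := Real.logb 2 (n:ℝ) with hxdef
  have hx64 : (64:ℝ) ≤ x := by
    have h1 : ((2:ℝ)^(64:ℕ)) ≤ (n:ℝ) := by exact_mod_cast hn
    have h2 := Real.logb_le_logb_of_le (b := 2) one_lt_two (by positivity) h1
    rw [Real.logb_pow, Real.logb_self_eq_one (by norm_num)] at h2
    norm_num at h2
    linarith
  have hLx : (L:ℝ) ≤ x := by
    have h1 : ((2:ℝ)^L) ≤ (n:ℝ) := by exact_mod_cast hpowL
    have h2 := Real.logb_le_logb_of_le (b := 2) one_lt_two (by positivity) h1
    rw [Real.logb_pow, Real.logb_self_eq_one (by norm_num)] at h2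
    norm_num at h2
    linarith
  have hxL : x ≤ (L:ℝ) + 1 := by
    have h1 : (n:ℝ) ≤ ((2:ℝ)^(L+1)) := by exact_mod_cast hpowL'.le
    have h2 := Real.logb_le_logb_of_le (b := 2) one_lt_two hNpos h1
    rw [Real.logb_pow, Real.logb_self_eq_one (by norm_num)] at h2
    push_cast at h2 ⊢; linarith
  have hkLnR : (k:ℝ)*(L:ℝ) ≤ (n:ℝ) := by exact_mod_cast hkL
  have hnk2L : (n:ℝ) ≤ 2*(L:ℝ)*(k:ℝ) := by
    have hmod := Nat.div_add_mod n L
    have hmodlt : n % L < L := Nat.mod_lt n hLpos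
    have : (n:ℝ) = (L:ℝ)*(k:ℝ) + ((n % L : ℕ):ℝ) := by
      rw [hkdef]; exact_mod_cast hmod.symm
    have hr : ((n % L : ℕ):ℝ) ≤ (L:ℝ) := by exact_mod_cast hmodlt.le
    nlinarith
  set lk := Real.logb 2 (k:ℝ) with hlkdef
  set lx := Real.logb 2 x with hlxdef
  have hlk0 : 0 ≤ lk := Real.logb_nonneg one_lt_two hkr1
  have hlx0 : 0 ≤ lx := Real.logb_nonneg one_lt_two (by linarith)
  have hlkub : lk ≤ x := by
    have : (k:ℝ) ≤ (n:ℝ) := by exact_mod_cast Nat.div_le_self n L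
    exact Real.logb_le_logb_of_le one_lt_two (by linarith) this
  have hlk1 : x - lx - 1 ≤ lk := by
    have hq : (n:ℝ)/(2*(L:ℝ)) ≤ (k:ℝ) := by
      rw [div_le_iff₀ (by positivity)]
      nlinarith
    have h1 : Real.logb 2 ((n:ℝ)/(2*(L:ℝ))) ≤ lk :=
      Real.logb_le_logb_of_le one_lt_two (by positivity) hq
    have h2 : Real.logb 2 ((n:ℝ)/(2*(L:ℝ))) = x - (1 + Real.logb 2 (L:ℝ)) := by
      rw [Real.logb_div (by positivity) (by positivity),
        Real.logb_mul (by norm_num) (by positivity),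
        Real.logb_self_eq_one (by norm_num)]
    have h3 : Real.logb 2 (L:ℝ) ≤ lx :=
      Real.logb_le_logb_of_le one_lt_two hLr0 hLx
    linarith
  have hlxub : lx ≤ x/2 := by
    set s := Real.sqrt x with hsdef
    have hs8 : (8:ℝ) ≤ s := by
      rw [hsdef]
      rw [Real.le_sqrt (by norm_num) (by linarith)]
      nlinarith
    have hs2 : s^2 = x := Real.sq_sqrt (by linarith)
    have hlog : Real.log x ≤ 2*(s - 1) := by
      have h1 := Real.log_le_sub_one_of_pos (show (0:ℝ) < s by linarith)
      have h2 : Real.log s = Real.log x / 2 := Real.log_sqrt (by linarith)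
      linarith
    have hl2 : (0.6931471803 : ℝ) < Real.log 2 := Real.log_two_gt_d9
    rw [hlxdef, Real.logb, div_le_iff₀ (by linarith)]
    nlinarith
  -- main count inequality in logs
  have hcountR : (((k:ℝ)^4)^m) ≤ (P:ℝ) * (n.factorial : ℝ) := by exact_mod_cast hcount
  have hfacR : (n.factorial : ℝ) ≤ (n:ℝ)^n := by exact_mod_cast Nat.factorial_le_pow n
  have hlogmain : 4*(m:ℝ)*lk ≤ Real.logb 2 (P:ℝ) + (n:ℝ)*x := by
    have l1 : Real.logb 2 (((k:ℝ)^4)^m) ≤ Real.logb 2 ((P:ℝ) * (n.factorial : ℝ)) :=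
      Real.logb_le_logb_of_le one_lt_two (by positivity) hcountR
    rw [Real.logb_pow, Real.logb_pow,
      Real.logb_mul (by exact_mod_cast hP1.trans_lt' zero_lt_one |>.ne')
        (by exact_mod_cast (Nat.factorial_pos n).ne')] at l1
    have l2 : Real.logb 2 (n.factorial : ℝ) ≤ (n:ℝ)*x := by
      have h := Real.logb_le_logb_of_le (b := 2) one_lt_two
        (by exact_mod_cast Nat.factorial_pos n) hfacR
      rwa [Real.logb_pow] at h
    push_cast at l1
    have hl3 : (m:ℝ)*(4*lk) = 4*(m:ℝ)*lk := by ring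
    linarith
  have hmR : (m:ℝ) = (n:ℝ) - 6*(k:ℝ) := by
    rw [hmdef]; push_cast [Nat.cast_sub hkn]; ring
  -- final assembly
  have hk6 : 6*(k:ℝ) ≤ (n:ℝ) := by exact_mod_cast hkn
  have p1 : ((n:ℝ) - 6*k)*(x - lx - 1) ≤ ((n:ℝ) - 6*k)*lk :=
    mul_le_mul_of_nonneg_left hlk1 (by linarith)
  have p3 : (k:ℝ)*(x - 1) ≤ (n:ℝ) := by nlinarith
  show Real.logb 2 (P:ℝ) ≥ _
  rw [hmR] at hlogmain
  nlinarith [p1, p3, mul_nonneg hkr0 hlx0, hk6, hkr0, hlogmain, hx64, hlxub, hlx0]
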